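/- Let H be a real Hilbert space, s ∈ H, and M̃ a countable collection of finite-dimensional subspaces of H containing the zero subspace. Let α > 0 and let (λ_n)_{n≥1} be a nondecreasing sequence of positive reals with λ_{2n} ≤ 2 λ_n for all n ≥ 1 and λ_n / n → 0 as n → ∞. Then sup_{n≥1} (λ_n/n)^{−2α/(1+2α)} · inf_{m ∈ M̃} ( ‖P_m s − s‖² + (λ_n/n)·D_m ) < ∞ if and only if sup_{M∈ℕ, M≥1} M^{α} · inf { ‖P_m s − s‖ : m ∈ M̃, D_m ≤ M } < ∞. -/

import Mathlib

open Filter Real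

set_option maxHeartbeats 1000000

private lemma dyadic_pick (a : ℕ → ℝ)
    (hhalf : ∀ k, a k / 2 ≤ a (k + 1))
    (hlim : Tendsto a atTop (nhds 0)) {t : ℝ} (ht : 0 < t) (ht0 : t ≤ a 0) :
    ∃ k, a k ≤ t ∧ t / 2 < a k := by
  classical
  have hex : ∃ k, a k ≤ t := by
    obtain ⟨k, hk⟩ := (hlim.eventually (gt_mem_nhds ht)).exists
    exact ⟨k, hk.le⟩
  refine ⟨Nat.find hex, Nat.find_spec hex, ?_⟩
  rcases Nat.eq_zero_or_pos (Nat.find hex) with h0 | hp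
  · have h1 := Nat.find_spec hex
    rw [h0] at h1 ⊢
    linarith
  · obtain ⟨j, hj⟩ := Nat.exists_eq_add_of_lt hp
    rw [zero_add] at hj
    have hmin : ¬ a j ≤ t := Nat.find_min hex (by omega)
    have := hhalf j
    rw [hj]
    linarith

private lemma core_lemma {ι : Type*} (E : ι → ℝ) (D : ι → ℕ) (hE : ∀ i, 0 ≤ E i)
    (i₀ : ι) (c : ℝ) (hc : 0 ≤ c) (hE0 : E i₀ = c) (hD0 : D i₀ = 0)
    (α : ℝ) (hα : 0 < α)
    (lam : ℕ → ℝ) (hpos : ∀ n : ℕ, 1 ≤ n → 0 < lam n) (hmono : Monotone lam)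
    (hdouble : ∀ n : ℕ, 1 ≤ n → lam (2 * n) ≤ 2 * lam n)
    (hlim : Tendsto (fun n : ℕ => lam n / n) atTop (nhds 0)) :
    (∃ C : ℝ, ∀ n : ℕ, 1 ≤ n →
        (lam n / n) ^ (-(2 * α / (1 + 2 * α))) *
          sInf {x : ℝ | ∃ i : ι, x = E i ^ 2 + (lam n / n) * (D i : ℝ)} ≤ C) ↔
    (∃ C : ℝ, ∀ M : ℕ, 1 ≤ M →
        (M : ℝ) ^ α * sInf {x : ℝ | ∃ i : ι, D i ≤ M ∧ x = E i} ≤ C) := by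
  classical
  have hp0 : (0:ℝ) < 1 + 2 * α := by linarith
  set p : ℝ := 1 + 2 * α with hpdef
  have hp : (0:ℝ) < p := hp0
  set β : ℝ := 2 * α / p with hβdef
  have hβ : 0 < β := by positivity
  have h1p : (0:ℝ) < 1 / p := by positivity
  -- exponent identities
  have e1 : 1 / p + β = 1 := by rw [hβdef, hpdef]; field_simp
  have e3 : -(1 / p) * -(2 * α) = β := by rw [hβdef]; field_simp
  have e4 : (1:ℝ) + -(1 / p) = β := by rw [hβdef, hpdef]; field_simp; ring
  have e5 : p * β = 2 * α := by rw [hβdef]; field_simp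
  set ε : ℕ → ℝ := fun n => lam n / n with hεdef
  have hεpos : ∀ n : ℕ, 1 ≤ n → 0 < ε n := fun n hn =>
    div_pos (hpos n hn) (by exact_mod_cast Nat.pos_of_ne_zero (by omega))
  set S : ℝ → Set ℝ := fun t => {x : ℝ | ∃ i : ι, x = E i ^ 2 + t * (D i : ℝ)} with hSdef
  set T : ℕ → Set ℝ := fun M => {x : ℝ | ∃ i : ι, D i ≤ M ∧ x = E i} with hTdef
  have hSne : ∀ t, (S t).Nonempty := fun t => ⟨_, i₀, rfl⟩
  have hSbdd : ∀ t, 0 ≤ t → BddBelow (S t) := by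
    rintro t ht
    refine ⟨0, ?_⟩
    rintro x ⟨i, rfl⟩
    have := hE i
    positivity
  have hQ0 : ∀ t, 0 ≤ t → 0 ≤ sInf (S t) := by
    intro t ht
    apply Real.sInf_nonneg
    rintro x ⟨i, rfl⟩
    have := hE i
    positivity
  have hQc : ∀ t, 0 ≤ t → sInf (S t) ≤ c ^ 2 := by
    intro t ht
    have hm : c ^ 2 ∈ S t := ⟨i₀, by rw [hE0, hD0]; simp⟩
    exact csInf_le (hSbdd t ht) hm
  have hTne : ∀ M : ℕ, (T M).Nonempty := fun M => ⟨E i₀, i₀, by rw [hD0]; omega, rfl⟩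
  have hTbdd : ∀ M : ℕ, BddBelow (T M) := by
    intro M
    refine ⟨0, ?_⟩
    rintro x ⟨i, _, rfl⟩
    exact hE i
  have hR0 : ∀ M : ℕ, 0 ≤ sInf (T M) := by
    intro M
    apply Real.sInf_nonneg
    rintro x ⟨i, _, rfl⟩
    exact hE i
  have hRc : ∀ M : ℕ, sInf (T M) ≤ c := by
    intro M
    have hm : c ∈ T M := ⟨i₀, by rw [hD0]; omega, hE0.symm⟩
    exact csInf_le (hTbdd M) hm
  constructor
  · -- forward direction
    rintro ⟨C, hC⟩
    have hC0 : 0 ≤ C := by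
      refine le_trans ?_ (hC 1 le_rfl)
      exact mul_nonneg (Real.rpow_nonneg (hεpos 1 le_rfl).le _) (hQ0 _ (hεpos 1 le_rfl).le)
    set c₁ : ℝ := C + 1 with hc₁def
    have hc₁ : 0 < c₁ := by rw [hc₁def]; linarith
    -- dyadic sequence
    set a : ℕ → ℝ := fun k => ε (2 ^ k) with hadef
    have hN : ∀ k : ℕ, 1 ≤ 2 ^ k := fun k => Nat.one_le_two_pow
    have hcast : ∀ k : ℕ, ((2 ^ (k + 1) : ℕ) : ℝ) = 2 * ((2 ^ k : ℕ) : ℝ) := by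
      intro k; push_cast; ring
    have hcpos : ∀ k : ℕ, (0:ℝ) < ((2 ^ k : ℕ) : ℝ) := fun k => by
      exact_mod_cast Nat.lt_of_lt_of_le Nat.zero_lt_one (hN k)
    have hhalf : ∀ k, a k / 2 ≤ a (k + 1) := by
      intro k
      have h1 : lam (2 ^ k) ≤ lam (2 ^ (k + 1)) :=
        hmono (Nat.pow_le_pow_right (by omega) (by omega))
      have h2 := hcast k
      have h3 := hcpos k
      have h4 := hcpos (k + 1)
      show ε (2 ^ k) / 2 ≤ ε (2 ^ (k + 1))
      rw [hεdef]
      simp only []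
      rw [div_div, div_le_div_iff₀ (by positivity) h4, h2]
      nlinarith [hpos _ (hN k)]
    have hdec : ∀ k, a (k + 1) ≤ a k := by
      intro k
      have h1 : lam (2 * 2 ^ k) ≤ 2 * lam (2 ^ k) := hdouble _ (hN k)
      have h2' : (2 : ℕ) * 2 ^ k = 2 ^ (k + 1) := by ring
      rw [h2'] at h1
      have h2 := hcast k
      have h3 := hcpos k
      have h4 := hcpos (k + 1)
      show ε (2 ^ (k + 1)) ≤ ε (2 ^ k)
      rw [hεdef]
      simp only []
      rw [div_le_div_iff₀ h4 h3, h2]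
      nlinarith [hpos _ (hN k)]
    have halim : Tendsto a atTop (nhds 0) := by
      have h2 : Tendsto (fun k : ℕ => 2 ^ k) atTop atTop :=
        tendsto_pow_atTop_atTop_of_one_lt (by omega)
      exact hlim.comp h2
    have ha0 : 0 < a 0 := hεpos _ (hN 0)
    -- key inequality
    have key : ∀ n : ℕ, 1 ≤ n → sInf (S (ε n)) < c₁ * (ε n) ^ β := by
      intro n hn
      have hεn := hεpos n hn
      have h := hC n hn
      have h2 := mul_le_mul_of_nonneg_left h (Real.rpow_pos_of_pos hεn β).le
      rw [← mul_assoc, ← Real.rpow_add hεn, add_neg_cancel, Real.rpow_zero, one_mul] at h2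
      calc sInf (S (ε n)) ≤ (ε n) ^ β * C := h2
        _ = C * (ε n) ^ β := by ring
        _ < c₁ * (ε n) ^ β := by
            have := Real.rpow_pos_of_pos hεn β
            rw [hc₁def]; nlinarith
    -- constants
    set A : ℝ := c₁ * 2 ^ β * c₁ ^ (2 * α) with hAdef
    have hA : 0 < A := by
      rw [hAdef]
      exact mul_pos (mul_pos hc₁ (Real.rpow_pos_of_pos two_pos β))
        (Real.rpow_pos_of_pos hc₁ _)
    set B : ℝ := c₁ * (2 / a 0) ^ (1 / p) with hBdef
    refine ⟨max (Real.sqrt A) (B ^ α * c), ?_⟩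
    intro M hM
    have hMpos : (0:ℝ) < M := by exact_mod_cast Nat.lt_of_lt_of_le Nat.zero_lt_one hM
    have hcM : 0 < c₁ / M := div_pos hc₁ hMpos
    set t₀ : ℝ := 2 * (c₁ / M) ^ p with ht₀def
    have ht₀pos : 0 < t₀ := by
      rw [ht₀def]
      have := Real.rpow_pos_of_pos hcM p
      linarith
    by_cases hcase : t₀ ≤ a 0
    · -- main case
      obtain ⟨k, hk1, hk2⟩ := dyadic_pick a hhalf halim ht₀pos hcase
      set n : ℕ := 2 ^ k with hndef
      have hn1 : 1 ≤ n := hN k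
      have hεn : 0 < ε n := hεpos n hn1
      obtain ⟨x, ⟨i, rfl⟩, hxlt⟩ := exists_lt_of_csInf_lt (hSne (ε n)) (key n hn1)
      have hEi2 : E i ^ 2 < c₁ * (ε n) ^ β := by
        have h0 : (0:ℝ) ≤ ε n * (D i : ℝ) := by positivity
        linarith
      have hεDi : ε n * (D i : ℝ) < c₁ * (ε n) ^ β := by
        have h0 : (0:ℝ) ≤ E i ^ 2 := by positivity
        linarith
      -- show D i ≤ M
      have hhalf' : (c₁ / M) ^ p < ε n := by
        have hh : t₀ / 2 = (c₁ / M) ^ p := by rw [ht₀def]; ring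
        rw [← hh]; exact hk2
      have h1 : c₁ / M < (ε n) ^ (1 / p) := by
        have h := Real.rpow_lt_rpow (Real.rpow_nonneg hcM.le p) hhalf' h1p
        rwa [← Real.rpow_mul hcM.le, mul_one_div, div_self hp.ne', Real.rpow_one] at h
      have hc₁lt : c₁ < (M : ℝ) * (ε n) ^ (1 / p) := by
        rw [div_lt_iff₀ hMpos] at h1
        exact h1.trans_eq (mul_comm _ _)
      have hDiM : (D i : ℝ) < M := by
        have h2 : c₁ * (ε n) ^ β < (M : ℝ) * (ε n) ^ (1 / p) * (ε n) ^ β :=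
          mul_lt_mul_of_pos_right hc₁lt (Real.rpow_pos_of_pos hεn β)
        have h3 : (M : ℝ) * (ε n) ^ (1 / p) * (ε n) ^ β = (M : ℝ) * ε n := by
          rw [mul_assoc, ← Real.rpow_add hεn, e1, Real.rpow_one]
        have h4 : ε n * (D i : ℝ) < (M : ℝ) * ε n := by
          calc ε n * (D i : ℝ) < c₁ * (ε n) ^ β := hεDi
            _ < (M : ℝ) * (ε n) ^ (1 / p) * (ε n) ^ β := h2
            _ = (M : ℝ) * ε n := h3
        have h5 : ε n * (D i : ℝ) < ε n * (M : ℝ) := h4.trans_eq (mul_comm _ _)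
        exact (mul_lt_mul_iff_right₀ hεn).mp h5
      have hDiM' : D i ≤ M := by exact_mod_cast hDiM.le
      -- bound E i
      have hεt₀β : (ε n) ^ β ≤ 2 ^ β * (c₁ / M) ^ (2 * α) := by
        have h1' : (ε n) ^ β ≤ t₀ ^ β := Real.rpow_le_rpow hεn.le hk1 hβ.le
        have h2' : t₀ ^ β = 2 ^ β * (c₁ / M) ^ (2 * α) := by
          rw [ht₀def, Real.mul_rpow (by norm_num) (Real.rpow_nonneg hcM.le p),
            ← Real.rpow_mul hcM.le, e5]
        linarith [h2' ▸ h1']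
      have hfinal : (M : ℝ) ^ α * E i ≤ Real.sqrt A := by
        rw [Real.le_sqrt (mul_nonneg (Real.rpow_nonneg hMpos.le _) (hE i)) hA.le]
        have hsq : ((M : ℝ) ^ α * E i) ^ 2 = (M : ℝ) ^ (2 * α) * E i ^ 2 := by
          rw [mul_pow]
          congr 1
          rw [← Real.rpow_natCast ((M:ℝ) ^ α) 2, ← Real.rpow_mul hMpos.le]
          congr 1
          push_cast
          ring
        rw [hsq]
        have h5 : E i ^ 2 ≤ c₁ * (2 ^ β * (c₁ / M) ^ (2 * α)) := by
          calc E i ^ 2 ≤ c₁ * (ε n) ^ β := hEi2.le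
            _ ≤ c₁ * (2 ^ β * (c₁ / M) ^ (2 * α)) :=
                mul_le_mul_of_nonneg_left hεt₀β hc₁.le
        calc (M : ℝ) ^ (2 * α) * E i ^ 2
            ≤ (M : ℝ) ^ (2 * α) * (c₁ * (2 ^ β * (c₁ / M) ^ (2 * α))) :=
              mul_le_mul_of_nonneg_left h5 (Real.rpow_nonneg hMpos.le _)
          _ = A := by
              rw [hAdef, Real.div_rpow hc₁.le hMpos.le]
              have hM2α : (0:ℝ) < (M : ℝ) ^ (2 * α) := Real.rpow_pos_of_pos hMpos _
              have hgen : ∀ x y z w : ℝ, x ≠ 0 → x * (y * (z * (w / x))) = y * z * w := by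
                intros x y z w hx
                field_simp
              exact hgen _ _ _ _ hM2α.ne'
      have hTle : sInf (T M) ≤ E i := csInf_le (hTbdd M) ⟨i, hDiM', rfl⟩
      calc (M : ℝ) ^ α * sInf (T M) ≤ (M : ℝ) ^ α * E i :=
            mul_le_mul_of_nonneg_left hTle (Real.rpow_nonneg hMpos.le _)
        _ ≤ Real.sqrt A := hfinal
        _ ≤ max (Real.sqrt A) (B ^ α * c) := le_max_left _ _
    · -- small M case
      push_neg at hcase
      have hMB : (M : ℝ) ≤ B := by
        have h1 : a 0 / 2 < (c₁ / M) ^ p := by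
          rw [ht₀def] at hcase; linarith
        have h2 : (a 0 / 2) ^ (1 / p) ≤ ((c₁ / M) ^ p) ^ (1 / p) :=
          Real.rpow_le_rpow (by positivity) h1.le h1p.le
        rw [← Real.rpow_mul hcM.le, mul_one_div, div_self hp.ne', Real.rpow_one,
          le_div_iff₀ hMpos] at h2
        have h3 : (0:ℝ) < (a 0 / 2) ^ (1 / p) := Real.rpow_pos_of_pos (by positivity) _
        have h4 : (2 / a 0) ^ (1 / p) = ((a 0 / 2) ^ (1 / p))⁻¹ := by
          rw [← Real.inv_rpow (by positivity), inv_div]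
        rw [hBdef, h4, ← mul_le_mul_iff_left₀ h3]
        calc (M : ℝ) * (a 0 / 2) ^ (1 / p) ≤ c₁ := by linarith
          _ = c₁ * ((a 0 / 2) ^ (1 / p))⁻¹ * (a 0 / 2) ^ (1 / p) := by field_simp
      have hBα : (M : ℝ) ^ α ≤ B ^ α := Real.rpow_le_rpow hMpos.le hMB hα.le
      calc (M : ℝ) ^ α * sInf (T M) ≤ B ^ α * c :=
            mul_le_mul hBα (hRc M) (hR0 M) (Real.rpow_nonneg (le_trans hMpos.le hMB) _)
        _ ≤ max (Real.sqrt A) (B ^ α * c) := le_max_right _ _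
  · -- reverse direction
    rintro ⟨C, hC⟩
    have hC0 : 0 ≤ C := by
      refine le_trans ?_ (hC 1 le_rfl)
      exact mul_nonneg (Real.rpow_nonneg (by norm_num) _) (hR0 1)
    refine ⟨max ((2 * C + 1) ^ 2 + 2) (c ^ 2), ?_⟩
    intro n hn
    have hεn := hεpos n hn
    by_cases hε1 : ε n ≤ 1
    · -- main case
      set N : ℝ := (ε n) ^ (-(1 / p)) with hNdef
      have hN1 : 1 ≤ N :=
        Real.one_le_rpow_of_pos_of_le_one_of_nonpos hεn hε1 (neg_nonpos.mpr h1p.le)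
      have hNpos : 0 < N := lt_of_lt_of_le one_pos hN1
      set M : ℕ := ⌈N⌉₊ with hMdef
      have hM1 : 1 ≤ M := by
        rw [hMdef]
        exact Nat.one_le_ceil_iff.mpr hNpos
      have hMpos : (0:ℝ) < M := by exact_mod_cast Nat.lt_of_lt_of_le Nat.zero_lt_one hM1
      have hNM : N ≤ M := Nat.le_ceil N
      have hM2N : (M : ℝ) ≤ 2 * N := by
        have h5 : (M : ℝ) < N + 1 := by
          rw [hMdef]
          exact_mod_cast Nat.ceil_lt_add_one hNpos.le
        linarith
      have hRM : sInf (T M) ≤ C * (M : ℝ) ^ (-α) := by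
        have h := hC M hM1
        have h2 := mul_le_mul_of_nonneg_left h (Real.rpow_pos_of_pos hMpos (-α)).le
        rw [← mul_assoc, ← Real.rpow_add hMpos, neg_add_cancel, Real.rpow_zero, one_mul] at h2
        calc sInf (T M) ≤ (M:ℝ) ^ (-α) * C := h2
          _ = C * (M:ℝ) ^ (-α) := by ring
      have hη : (0:ℝ) < (C + 1) * (M : ℝ) ^ (-α) :=
        mul_pos (by linarith) (Real.rpow_pos_of_pos hMpos _)
      obtain ⟨x, ⟨i, hDi, rfl⟩, hxlt⟩ :=
        exists_lt_of_csInf_lt (hTne M) (lt_add_of_pos_right (sInf (T M)) hη)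
      have hEi : E i < (2 * C + 1) * (M : ℝ) ^ (-α) := by
        calc E i < sInf (T M) + (C + 1) * (M : ℝ) ^ (-α) := hxlt
          _ ≤ C * (M:ℝ) ^ (-α) + (C + 1) * (M : ℝ) ^ (-α) := by linarith
          _ = (2 * C + 1) * (M : ℝ) ^ (-α) := by ring
      have hQle : sInf (S (ε n)) ≤ E i ^ 2 + ε n * (D i : ℝ) :=
        csInf_le (hSbdd _ hεn.le) ⟨i, rfl⟩
      have hb1 : E i ^ 2 ≤ (2 * C + 1) ^ 2 * ((M:ℝ) ^ (-α)) ^ 2 := by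
        have h := pow_le_pow_left₀ (hE i) hEi.le 2
        rwa [mul_pow] at h
      have hMα2 : ((M:ℝ) ^ (-α)) ^ 2 ≤ (ε n) ^ β := by
        have h1 : ((M:ℝ) ^ (-α)) ^ 2 = (M:ℝ) ^ (-(2*α)) := by
          rw [← Real.rpow_natCast ((M:ℝ) ^ (-α)) 2, ← Real.rpow_mul hMpos.le]
          congr 1
          push_cast
          ring
        rw [h1]
        have h2 : (M:ℝ) ^ (-(2*α)) ≤ N ^ (-(2*α)) :=
          Real.rpow_le_rpow_of_nonpos hNpos hNM (by linarith)
        have h3 : N ^ (-(2*α)) = (ε n) ^ β := by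
          rw [hNdef, ← Real.rpow_mul hεn.le, e3]
        linarith [h3 ▸ h2]
      have hb2 : ε n * (D i : ℝ) ≤ 2 * (ε n) ^ β := by
        have h1 : ε n * (D i : ℝ) ≤ ε n * M := by
          have hDi' : (D i : ℝ) ≤ M := by exact_mod_cast hDi
          exact mul_le_mul_of_nonneg_left hDi' hεn.le
        have h2 : ε n * (M:ℝ) ≤ ε n * (2 * N) := mul_le_mul_of_nonneg_left hM2N hεn.le
        have h3 : ε n * (2 * N) = 2 * (ε n) ^ β := by
          rw [hNdef,
            show ε n * (2 * (ε n) ^ (-(1 / p))) = 2 * ((ε n) ^ (1:ℝ) * (ε n) ^ (-(1 / p))) by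
              rw [Real.rpow_one]; ring,
            ← Real.rpow_add hεn, e4]
        linarith
      have hQb : sInf (S (ε n)) ≤ ((2 * C + 1) ^ 2 + 2) * (ε n) ^ β := by
        have hb1' : E i ^ 2 ≤ (2 * C + 1) ^ 2 * (ε n) ^ β := by
          calc E i ^ 2 ≤ (2 * C + 1) ^ 2 * ((M:ℝ) ^ (-α)) ^ 2 := hb1
            _ ≤ (2 * C + 1) ^ 2 * (ε n) ^ β := mul_le_mul_of_nonneg_left hMα2 (sq_nonneg _)
        calc sInf (S (ε n)) ≤ E i ^ 2 + ε n * (D i : ℝ) := hQle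
          _ ≤ (2 * C + 1) ^ 2 * (ε n) ^ β + 2 * (ε n) ^ β := by linarith
          _ = ((2 * C + 1) ^ 2 + 2) * (ε n) ^ β := by ring
      have hfin : (ε n) ^ (-β) * sInf (S (ε n)) ≤ (2 * C + 1) ^ 2 + 2 := by
        have h2 := mul_le_mul_of_nonneg_left hQb (Real.rpow_pos_of_pos hεn (-β)).le
        rwa [show (ε n) ^ (-β) * (((2 * C + 1) ^ 2 + 2) * (ε n) ^ β)
            = ((2 * C + 1) ^ 2 + 2) * ((ε n) ^ (-β) * (ε n) ^ β) by ring,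
          ← Real.rpow_add hεn, neg_add_cancel, Real.rpow_zero, mul_one] at h2
      calc (ε n) ^ (-β) * sInf (S (ε n)) ≤ (2 * C + 1) ^ 2 + 2 := hfin
        _ ≤ max ((2 * C + 1) ^ 2 + 2) (c ^ 2) := le_max_left _ _
    · -- ε n > 1
      push_neg at hε1
      have h1 : (ε n) ^ (-β) ≤ 1 :=
        Real.rpow_le_one_of_one_le_of_nonpos hε1.le (by linarith)
      calc (ε n) ^ (-β) * sInf (S (ε n)) ≤ 1 * (c ^ 2) :=
            mul_le_mul h1 (hQc _ hεn.le) (hQ0 _ hεn.le) zero_le_one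
        _ = c ^ 2 := one_mul _
        _ ≤ max ((2 * C + 1) ^ 2 + 2) (c ^ 2) := le_max_right _ _

/-- characterization of the approximation space `A^α` of a countable
collection of finite-dimensional subspaces containing the zero subspace. -/
theorem stmt_0 {H : Type*} [NormedAddCommGroup H] [InnerProductSpace ℝ H]
    {ι : Type*} [Countable ι] (m : ι → Submodule ℝ H)
    [∀ i, FiniteDimensional ℝ (m i)] (i₀ : ι) (hi₀ : m i₀ = ⊥)
    (s : H) (α : ℝ) (hα : 0 < α)
    (lam : ℕ → ℝ) (hpos : ∀ n : ℕ, 1 ≤ n → 0 < lam n) (hmono : Monotone lam)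
    (hdouble : ∀ n : ℕ, 1 ≤ n → lam (2 * n) ≤ 2 * lam n)
    (hlim : Filter.Tendsto (fun n : ℕ => lam n / n) Filter.atTop (nhds 0)) :
    (∃ C : ℝ, ∀ n : ℕ, 1 ≤ n →
        (lam n / n) ^ (-(2 * α / (1 + 2 * α))) *
          sInf {x : ℝ | ∃ i : ι,
            x = ‖((m i).orthogonalProjectionOnto s : H) - s‖ ^ 2 +
              (lam n / n) * (Module.finrank ℝ (m i) : ℝ)} ≤ C) ↔
    (∃ C : ℝ, ∀ M : ℕ, 1 ≤ M →
        (M : ℝ) ^ α *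
          sInf {x : ℝ | ∃ i : ι, Module.finrank ℝ (m i) ≤ M ∧
            x = ‖((m i).orthogonalProjectionOnto s : H) - s‖} ≤ C) := by
  have hproj : (((m i₀).orthogonalProjectionOnto s : H)) = 0 := by
    have h := ((m i₀).orthogonalProjectionOnto s).2
    have hle : m i₀ ≤ ⊥ := le_of_eq hi₀
    simpa using hle h
  have hE0 : ‖((m i₀).orthogonalProjectionOnto s : H) - s‖ = ‖s‖ := by
    rw [hproj, zero_sub, norm_neg]
  have hD0 : Module.finrank ℝ (m i₀) = 0 := by
    simp [hi₀]
  exact core_lemma (fun i => ‖((m i).orthogonalProjectionOnto s : H) - s‖)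
    (fun i => Module.finrank ℝ (m i)) (fun i => norm_nonneg _)
    i₀ ‖s‖ (norm_nonneg s) hE0 hD0 α hα lam hpos hmono hdouble hlim
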